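/- arXiv:2101.10008 — 2 statements merged into one kernel-verified Lean document; each statement's English description precedes it below -/
import Mathlib

section
/- The SEA-BREW Decrypt primitive is correct (equation (16)): for all α, r, s, β in ZMod p with β ≠ 0 and every message M in H, writing the ciphertext components as C̃ = M + (α*s) • e(g)(g) and C = (s*β) • g, the decryption-key component as D = (β⁻¹*(α+r)) • g, and the DecryptNode output as A = (r*s) • e(g)(g), one has C̃ − (e(C)(D) − A) = M. -/
theorem seabrew_decrypt_correct
    (p : ℕ) [Fact p.Prime]
    (G H : Type*) [AddCommGroup G] [AddCommGroup H]
    [Module (ZMod p) G] [Module (ZMod p) H]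
    (e : G →ₗ[ZMod p] G →ₗ[ZMod p] H) (g : G)
    (α r s β : ZMod p) (hβ : β ≠ 0) (M : H) :
    (M + (α * s) • e g g) -
      (e ((s * β) • g) ((β⁻¹ * (α + r)) • g) - (r * s) • e g g) = M := by
  simp only [map_smul, LinearMap.smul_apply, smul_smul]
  rw [show β⁻¹ * (α + r) * (s * β) = α * s + r * s by
    field_simp]
  rw [add_smul]; abel
end

section
/- SEA-BREW decryption remains correct after a revocation, i.e., a non-revoked consumer whose key was updated can decrypt a re-encrypted ciphertext: for all α, r, s, β₁, β₂ in ZMod p with β₁ ≠ 0 and β₂ ≠ 0, and every message M in H, writing the re-encrypted ciphertext component as C' = (β₂ * β₁⁻¹) • ((s * β₁) • g), the updated decryption-key field as D' = (β₁ * β₂⁻¹) • ((β₁⁻¹ * (α + r)) • g), C̃ = M + (α*s) • e(g)(g), and A = (r*s) • e(g)(g), one has C̃ − (e(C')(D') − A) = M. -/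
theorem seabrew_decrypt_after_revocation_correct
    (p : ℕ) [Fact p.Prime]
    (G H : Type*) [AddCommGroup G] [AddCommGroup H]
    [Module (ZMod p) G] [Module (ZMod p) H]
    (e : G →ₗ[ZMod p] G →ₗ[ZMod p] H) (g : G)
    (α r s β₁ β₂ : ZMod p) (hβ₁ : β₁ ≠ 0) (hβ₂ : β₂ ≠ 0) (M : H) :
    (M + (α * s) • e g g) -
      (e ((β₂ * β₁⁻¹) • ((s * β₁) • g)) ((β₁ * β₂⁻¹) • ((β₁⁻¹ * (α + r)) • g))
        - (r * s) • e g g) = M := by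
  simp only [map_smul, LinearMap.smul_apply, smul_smul]
  have h : β₁ * β₂⁻¹ * (β₁⁻¹ * (α + r)) * (β₂ * β₁⁻¹ * (s * β₁)) = s * (α + r) := by
    field_simp
  rw [h]
  rw [show s * (α + r) = α * s + r * s by ring, add_smul]
  abel
end
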